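/- Let $C \subseteq \{0,1\}^n$ be a self-complementary code with minimum distance $d$ satisfying $n - (n-2d)^2 > 0$. Then $|C| \le \frac{8d(n-d)}{n - (n-2d)^2}$ (the Grey-Rankin bound). -/

import Mathlib

open Finset

/-- The ±1 vector associated to a binary word. -/
private def xv {n : ℕ} (c : Fin n → Bool) (k : Fin n) : ℝ := if c k then 1 else -1

private lemma xv_mul_self {n : ℕ} (c : Fin n → Bool) (k : Fin n) :
    xv c k * xv c k = 1 := by
  by_cases h : c k <;> simp [xv, h]

private lemma xv_compl {n : ℕ} (c : Fin n → Bool) (k : Fin n) :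
    xv (fun j => !(c j)) k = - xv c k := by
  by_cases h : c k <;> simp [xv, h]

/-- Inner product of the associated ±1 vectors. -/
private def ip {n : ℕ} (c c' : Fin n → Bool) : ℝ := ∑ k, xv c k * xv c' k

private lemma ip_self {n : ℕ} (c : Fin n → Bool) : ip c c = n := by
  simp [ip, xv_mul_self]

private lemma ip_compl_right {n : ℕ} (c c' : Fin n → Bool) :
    ip c (fun j => !(c' j)) = - ip c c' := by
  unfold ip
  rw [← Finset.sum_neg_distrib]
  refine Finset.sum_congr rfl fun k _ => ?_
  rw [xv_compl, mul_neg]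

private lemma ip_eq {n : ℕ} (c c' : Fin n → Bool) :
    ip c c' = n - 2 * hammingDist c c' := by
  have h : ∀ k, xv c k * xv c' k = 1 - 2 * (if c k ≠ c' k then (1:ℝ) else 0) := by
    intro k; by_cases h1 : c k <;> by_cases h2 : c' k <;> simp [xv, h1, h2] <;> norm_num
  unfold ip
  rw [Finset.sum_congr rfl fun k _ => h k, Finset.sum_sub_distrib, ← Finset.mul_sum,
    Finset.sum_boole]
  simp [hammingDist]

private lemma sum_swap4 {α β : Type*} [Fintype β] (s : Finset α)
    (f : α → α → β → β → ℝ) :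
    ∑ c ∈ s, ∑ c' ∈ s, ∑ k, ∑ l, f c c' k l
      = ∑ k, ∑ l, ∑ c ∈ s, ∑ c' ∈ s, f c c' k l := by
  calc ∑ c ∈ s, ∑ c' ∈ s, ∑ k, ∑ l, f c c' k l
      = ∑ c ∈ s, ∑ k, ∑ c' ∈ s, ∑ l, f c c' k l :=
        Finset.sum_congr rfl fun c _ => Finset.sum_comm
    _ = ∑ k, ∑ c ∈ s, ∑ c' ∈ s, ∑ l, f c c' k l := Finset.sum_comm
    _ = ∑ k, ∑ c ∈ s, ∑ l, ∑ c' ∈ s, f c c' k l :=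
        Finset.sum_congr rfl fun k _ => Finset.sum_congr rfl fun c _ => Finset.sum_comm
    _ = ∑ k, ∑ l, ∑ c ∈ s, ∑ c' ∈ s, f c c' k l :=
        Finset.sum_congr rfl fun k _ => Finset.sum_comm

/-- The Grey–Rankin bound for self-complementary binary codes. -/
theorem grey_rankin (n d : ℕ) (C : Finset (Fin n → Bool))
    (hsc : ∀ c ∈ C, (fun k => !(c k)) ∈ C)
    (hd : ∀ c₁ ∈ C, ∀ c₂ ∈ C, c₁ ≠ c₂ → d ≤ hammingDist c₁ c₂)
    (hpos : 0 < (n : ℝ) - ((n : ℝ) - 2 * d) ^ 2) :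
    (C.card : ℝ) ≤ 8 * d * ((n : ℝ) - d) / ((n : ℝ) - ((n : ℝ) - 2 * d) ^ 2) := by
  classical
  set s : ℝ := (n : ℝ) - 2 * d with hs
  set M : ℝ := (C.card : ℝ) with hMdef
  have hn0 : 0 < (n : ℝ) := by nlinarith [sq_nonneg s]
  have hnn : 0 < n := by exact_mod_cast hn0
  have hn1 : (1 : ℝ) ≤ n := by exact_mod_cast hnn
  -- the pairwise inner product bound
  have hiple : ∀ c ∈ C, ∀ c' ∈ C, c ≠ c' → ip c c' ≤ s := by
    intro c hc c' hc' hne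
    have h1 : (d : ℝ) ≤ hammingDist c c' := by exact_mod_cast hd c hc c' hc' hne
    have h2 := ip_eq c c'
    rw [hs]; linarith
  have hsq : ∀ c ∈ C, ∀ c' ∈ C, c ≠ c' → c' ≠ (fun k => !(c k)) → (ip c c') ^ 2 ≤ s ^ 2 := by
    intro c hc c' hc' h1 h2
    have hle := hiple c hc c' hc' h1
    have hge : -s ≤ ip c c' := by
      have hcc : (fun k => !(c' k)) ∈ C := hsc c' hc'
      have hne : c ≠ (fun k => !(c' k)) := by
        intro h
        apply h2
        funext k
        have := congrFun h k
        simp only [this]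
        simp
      have h3 := hiple c hc _ hcc hne
      rw [ip_compl_right] at h3
      linarith
    exact sq_le_sq' hge hle
  -- the row bound
  have hrow : ∀ c ∈ C, ∑ c' ∈ C, (ip c c') ^ 2 ≤ 2 * (n : ℝ) ^ 2 + (M - 2) * s ^ 2 := by
    intro c hc
    set cb : Fin n → Bool := fun k => !(c k) with hcb
    have hcbC : cb ∈ C := hsc c hc
    have hcbne : cb ≠ c := by
      intro h
      have := congrFun h ⟨0, hnn⟩
      simp [hcb] at this
    have hcb' : cb ∈ C.erase c := Finset.mem_erase.mpr ⟨hcbne, hcbC⟩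
    rw [← Finset.add_sum_erase _ _ hc, ← Finset.add_sum_erase _ _ hcb']
    have h1 : (ip c c) ^ 2 = (n : ℝ) ^ 2 := by rw [ip_self]
    have h2 : (ip c cb) ^ 2 = (n : ℝ) ^ 2 := by
      rw [hcb, ip_compl_right, ip_self]; ring
    have h3 : ∑ c' ∈ (C.erase c).erase cb, (ip c c') ^ 2
        ≤ (((C.erase c).erase cb).card : ℝ) * s ^ 2 := by
      have := Finset.sum_le_card_nsmul ((C.erase c).erase cb) (fun c' => (ip c c') ^ 2)
        (s ^ 2) ?_
      · simpa [nsmul_eq_mul] using this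
      · intro c' hc'
        rcases Finset.mem_erase.mp hc' with ⟨hne1, hc''⟩
        rcases Finset.mem_erase.mp hc'' with ⟨hne2, hc3⟩
        exact hsq c hc c' hc3 (Ne.symm hne2) hne1
    have hcard2 : 2 ≤ C.card := by
      refine Finset.one_lt_card.mpr ⟨c, hc, cb, hcbC, Ne.symm hcbne⟩
    have hcardeq : (((C.erase c).erase cb).card : ℝ) = M - 2 := by
      rw [Finset.card_erase_of_mem hcb', Finset.card_erase_of_mem hc]
      have h4 : C.card - 1 - 1 = C.card - 2 := by omega
      rw [h4, Nat.cast_sub hcard2]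
      norm_num [hMdef]
    rw [hcardeq] at h3
    linarith
  -- lower bound on the double sum
  have hlow : (n : ℝ) * M ^ 2 ≤ ∑ c ∈ C, ∑ c' ∈ C, (ip c c') ^ 2 := by
    have expand : ∑ c ∈ C, ∑ c' ∈ C, (ip c c') ^ 2
        = ∑ k : Fin n, ∑ l : Fin n, (∑ c ∈ C, xv c k * xv c l) ^ 2 := by
      calc ∑ c ∈ C, ∑ c' ∈ C, (ip c c') ^ 2
          = ∑ c ∈ C, ∑ c' ∈ C, ∑ k : Fin n, ∑ l : Fin n,
              (xv c k * xv c l) * (xv c' k * xv c' l) := by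
            refine Finset.sum_congr rfl fun c _ => Finset.sum_congr rfl fun c' _ => ?_
            rw [sq, ip, Finset.sum_mul_sum]
            exact Finset.sum_congr rfl fun k _ => Finset.sum_congr rfl fun l _ => by ring
        _ = ∑ k : Fin n, ∑ l : Fin n, ∑ c ∈ C, ∑ c' ∈ C,
              (xv c k * xv c l) * (xv c' k * xv c' l) := sum_swap4 C _
        _ = ∑ k : Fin n, ∑ l : Fin n, (∑ c ∈ C, xv c k * xv c l) ^ 2 := by
            refine Finset.sum_congr rfl fun k _ => Finset.sum_congr rfl fun l _ => ?_
            rw [sq, Finset.sum_mul_sum]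
    rw [expand]
    have diag : ∀ k : Fin n, (∑ c ∈ C, xv c k * xv c k) = M := by
      intro k
      rw [Finset.sum_congr rfl fun c _ => xv_mul_self c k, Finset.sum_const, nsmul_eq_mul,
        mul_one]
    calc (n : ℝ) * M ^ 2 = ∑ _k : Fin n, M ^ 2 := by
          rw [Finset.sum_const, Finset.card_univ, Fintype.card_fin, nsmul_eq_mul]
      _ ≤ ∑ k : Fin n, ∑ l : Fin n, (∑ c ∈ C, xv c k * xv c l) ^ 2 := by
          refine Finset.sum_le_sum fun k _ => ?_
          have := Finset.single_le_sum
            (f := fun l => (∑ c ∈ C, xv c k * xv c l) ^ 2)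
            (fun l _ => sq_nonneg _) (Finset.mem_univ k)
          rw [← diag k]
          exact this
  -- combine
  have hkey : (n : ℝ) * M ^ 2 ≤ M * (2 * (n : ℝ) ^ 2 + (M - 2) * s ^ 2) := by
    calc (n : ℝ) * M ^ 2 ≤ ∑ c ∈ C, ∑ c' ∈ C, (ip c c') ^ 2 := hlow
      _ ≤ ∑ _c ∈ C, (2 * (n : ℝ) ^ 2 + (M - 2) * s ^ 2) := Finset.sum_le_sum hrow
      _ = M * (2 * (n : ℝ) ^ 2 + (M - 2) * s ^ 2) := by
          rw [Finset.sum_const, nsmul_eq_mul]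
  have h8 : 8 * (d : ℝ) * ((n : ℝ) - d) = 2 * ((n : ℝ) ^ 2 - s ^ 2) := by rw [hs]; ring
  rw [h8, le_div_iff₀ hpos]
  have hM0 : (0 : ℝ) ≤ M := Nat.cast_nonneg _
  rcases hM0.eq_or_lt with h | h
  · rw [← h]
    nlinarith
  · have h2 : M * (M * ((n : ℝ) - s ^ 2)) ≤ M * (2 * ((n : ℝ) ^ 2 - s ^ 2)) := by
      nlinarith [hkey]
    exact le_of_mul_le_mul_left h2 h
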